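/- Let X be a countable alphabet, p a probability distribution on X, and X_1,...,X_n i.i.d. samples from p with empirical estimator p̂_u = #{i ≤ n : X_i = u}/n. Fix a positive even integer m with d = m/2 and δ_1, δ_2 ∈ (0,1), and for each n let c_{k,m,n} (1 ≤ k ≤ d) be nonnegative coefficients satisfying the binomial central-moment identity and the growth bound c_{k,m,n} ≤ k^{m−k} n^k for all 1 ≤ k ≤ d. Then there exists a constant C > 0, depending only on m, δ_1 and δ_2, such that for every n ≥ 2 and every realization of the sample, R_{δ_1,δ_2,m}(X^n) ≤ (1/n)·(c_{d,m,n}/δ_1)^{1/m}·( Σ_{u∈X} (p̂_u(1−p̂_u))^{d} )^{1/m} + C·n^{−(1/2)(1 + 1/m)}, where R_{δ_1,δ_2,m}(X^n) = (1/n)·√(n/(n−1))·( (1/δ_1)·( Σ_{u∈X} Σ_{k=1}^{d} c_{k,m,n} (p̂_u(1−p̂_u))^k + ε_n ) )^{1/m} and ε_n = √( (2/n)·log(1/δ_2) ) · ( sup_{q∈[0,1]} Σ_{k=1}^{d} c_{k,m,n} k (q(1−q))^{k−1}(1−2q) + Σ_{k=1}^{d} c_{k,m,n} k(k−1)/(n·2^{2k−3})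 ). -/

import Mathlib

open MeasureTheory ProbabilityTheory Finset

/-- The empirical (maximum likelihood) estimator `p̂_u = #{i ≤ n : X_i = u} / n`. -/
noncomputable def emp {𝒳 : Type*} [DecidableEq 𝒳] {Ω : Type*} {n : ℕ}
    (X : Fin n → Ω → 𝒳) (ω : Ω) (u : 𝒳) : ℝ :=
  ((Finset.univ.filter (fun i => X i ω = u)).card : ℝ) / n

/-- The coefficients `c k` (for `1 ≤ k ≤ d`) satisfy the binomial central-moment identity:
for every `θ ∈ [0,1]` and `Y ~ Bin(n, θ)`,
`E[(Y - nθ)^m] = ∑_{k=1}^d c k (θ(1-θ))^k`. -/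
def MomentIdentity (n m d : ℕ) (c : ℕ → ℝ) : Prop :=
  ∀ θ : ℝ, θ ∈ Set.Icc (0:ℝ) 1 →
    ∑ y ∈ Finset.range (n+1),
        (n.choose y : ℝ) * θ^y * (1-θ)^(n-y) * ((y:ℝ) - n*θ)^m
      = ∑ k ∈ Finset.Icc 1 d, c k * (θ*(1-θ))^k


/-- The McDiarmid correction term `ε_n` of Theorem 3 / Proposition 1. -/
noncomputable def epsN (n d : ℕ) (c : ℕ → ℝ) (δ₂ : ℝ) : ℝ :=
  Real.sqrt ((2/(n:ℝ)) * Real.log (1/δ₂)) *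
    ((⨆ q ∈ Set.Icc (0:ℝ) 1,
        ∑ k ∈ Finset.Icc 1 d, c k * k * (q*(1-q))^(k-1) * (1-2*q)) +
      ∑ k ∈ Finset.Icc 1 d, c k * k * ((k:ℝ)-1) / ((n:ℝ) * (2:ℝ)^(2*(k:ℤ)-3)))

/-- The data-dependent confidence bound `R_{δ₁,δ₂,m}(Xⁿ)` of Theorem 3, expressed as a
function of the empirical sum `S = ∑_u ∑_{k=1}^d c_k (p̂_u(1-p̂_u))^k`. -/
noncomputable def Rb (n d m : ℕ) (c : ℕ → ℝ) (δ₁ δ₂ : ℝ) (S : ℝ) : ℝ :=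
  (1/(n:ℝ)) * Real.sqrt ((n:ℝ)/((n:ℝ)-1)) *
    ((1/δ₁) * (S + epsN n d c δ₂)) ^ ((1:ℝ)/(m:ℝ))

/-- The empirical sum `∑_u ∑_{k=1}^d c_k (p̂_u(1-p̂_u))^k` appearing in `R_{δ₁,δ₂,m}`. -/
noncomputable def empSum {𝒳 : Type*} [DecidableEq 𝒳] {Ω : Type*} {n : ℕ}
    (d : ℕ) (c : ℕ → ℝ) (X : Fin n → Ω → 𝒳) (ω : Ω) : ℝ :=
  ∑' u, ∑ k ∈ Finset.Icc 1 d, c k * (emp X ω u * (1 - emp X ω u))^k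

section aux
variable {𝒳 : Type*} [DecidableEq 𝒳] {Ω : Type*} {n : ℕ} (X : Fin n → Ω → 𝒳) (ω : Ω)

lemma emp_nonneg (u : 𝒳) : 0 ≤ emp X ω u := by unfold emp; positivity

lemma emp_le_one (hn : 0 < n) (u : 𝒳) : emp X ω u ≤ 1 := by
  unfold emp
  rw [div_le_one (by exact_mod_cast hn)]
  exact_mod_cast (Finset.card_filter_le _ _).trans (by simp)

lemma emp_support_finite : (Function.support (emp X ω)).Finite := by
  apply Set.Finite.subset (Set.finite_range fun i => X i ω)
  intro u hu
  rw [Function.mem_support] at hu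
  have hne : (Finset.univ.filter (fun i => X i ω = u)).Nonempty := by
    rw [Finset.nonempty_iff_ne_empty]
    intro h
    apply hu
    unfold emp
    rw [h]
    simp
  obtain ⟨i, hi⟩ := hne
  exact ⟨i, (Finset.mem_filter.mp hi).2⟩

lemma emp_summable : Summable (emp X ω) :=
  summable_of_finite_support (emp_support_finite X ω)

lemma emp_tsum (hn : 0 < n) : ∑' u, emp X ω u = 1 := by
  classical
  rw [tsum_eq_sum (s := (emp_support_finite X ω).toFinset)
    (fun u hu => by simpa [Set.Finite.mem_toFinset, Function.mem_support] using hu)]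
  have hmem : ∀ i : Fin n, i ∈ Finset.univ → X i ω ∈ (emp_support_finite X ω).toFinset := by
    intro i _
    rw [Set.Finite.mem_toFinset, Function.mem_support]
    unfold emp
    have hpos : 0 < (Finset.univ.filter (fun j => X j ω = X i ω)).card :=
      Finset.card_pos.mpr ⟨i, by simp⟩
    exact div_ne_zero (by exact_mod_cast hpos.ne') (by exact_mod_cast hn.ne')
  have hcards := Finset.card_eq_sum_card_fiberwise hmem
  show (∑ u ∈ (emp_support_finite X ω).toFinset,
      ((Finset.univ.filter (fun i => X i ω = u)).card : ℝ) / n) = 1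
  rw [← Finset.sum_div]
  rw [show ∑ u ∈ (emp_support_finite X ω).toFinset,
      ((Finset.univ.filter (fun i => X i ω = u)).card : ℝ)
      = ((∑ u ∈ (emp_support_finite X ω).toFinset,
          (Finset.univ.filter (fun i => X i ω = u)).card : ℕ) : ℝ) by push_cast; rfl]
  rw [← hcards, Finset.card_univ, Fintype.card_fin]
  exact div_self (by exact_mod_cast hn.ne')

lemma emp_pow_summable (k : ℕ) (hk : k ≠ 0) :
    Summable (fun u => (emp X ω u * (1 - emp X ω u))^k) := by
  apply summable_of_finite_support
  apply (emp_support_finite X ω).subset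
  intro u hu
  rw [Function.mem_support] at hu ⊢
  intro h0
  apply hu
  rw [h0, zero_mul, zero_pow hk]

lemma emp_pow_tsum_le (hn : 0 < n) (k : ℕ) (hk : k ≠ 0) :
    ∑' u, (emp X ω u * (1 - emp X ω u))^k ≤ 1 := by
  refine le_trans (Summable.tsum_le_tsum (fun u => ?_) (emp_pow_summable X ω k hk) (emp_summable X ω))
    (le_of_eq (emp_tsum X ω hn))
  have h0 := emp_nonneg X ω u
  have h1 := emp_le_one X ω hn u
  have hx0 : 0 ≤ emp X ω u * (1 - emp X ω u) := mul_nonneg h0 (by linarith)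
  have hx1 : emp X ω u * (1 - emp X ω u) ≤ 1 := by nlinarith
  have hxe : emp X ω u * (1 - emp X ω u) ≤ emp X ω u := by nlinarith
  exact (pow_le_of_le_one hx0 hx1 hk).trans hxe

lemma emp_pow_tsum_nonneg (k : ℕ) :
    0 ≤ ∑' u, (emp X ω u * (1 - emp X ω u))^k := by
  refine tsum_nonneg fun u => pow_nonneg ?_ k
  have h0 := emp_nonneg X ω u
  rcases le_or_gt n 0 with h | h
  · have : n = 0 := by omega
    subst this
    unfold emp
    simp
  · nlinarith [emp_le_one X ω h u]

lemma sqrt_ratio_le {N : ℝ} (hN2 : 2 ≤ N) : Real.sqrt (N/(N-1)) ≤ 1 + 1/N := by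
  have hN0 : (0:ℝ) < N := by linarith
  have h1 : N/(N-1) ≤ (1+1/N)^2 := by
    rw [div_le_iff₀ (by linarith)]
    have h2 : N * (1/N) = 1 := mul_one_div_cancel hN0.ne'
    have ht : 1/N ≤ 1/2 := one_div_le_one_div_of_le (by norm_num) hN2
    have ht0 : (0:ℝ) ≤ 1/N := by positivity
    nlinarith [h2, ht, ht0, mul_nonneg ht0 ht0]
  calc Real.sqrt (N/(N-1)) ≤ Real.sqrt ((1+1/N)^2) := Real.sqrt_le_sqrt h1
    _ = 1 + 1/N := Real.sqrt_sq (by positivity)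

lemma rpow_add_le_add_rpow_real {x y p : ℝ} (hx : 0 ≤ x) (hy : 0 ≤ y)
    (hp0 : 0 ≤ p) (hp1 : p ≤ 1) : (x + y) ^ p ≤ x ^ p + y ^ p := by
  lift x to NNReal using hx
  lift y to NNReal using hy
  have h := NNReal.rpow_add_le_add_rpow x y hp0 hp1
  rw [← NNReal.coe_add, ← NNReal.coe_rpow, ← NNReal.coe_rpow, ← NNReal.coe_rpow]
  exact_mod_cast h
end aux


set_option maxHeartbeats 2000000 in
/-- **Corollary 1 (simplified data-dependent bound).** There is a constant `C > 0`
depending only on `m, δ₁, δ₂` such that for every `n ≥ 2`, coefficients `c n` satisfying the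
moment identity and the growth bound `c_{k,m,n} ≤ k^{m-k} n^k`, and every realization of the
i.i.d. sample,
`R_{δ₁,δ₂,m}(Xⁿ) ≤ (1/n)(c_{d,m,n}/δ₁)^{1/m} (∑_u (p̂_u(1-p̂_u))^{m/2})^{1/m}
  + C n^{-(1/2)(1+1/m)}`. -/
theorem R_bound_simplified
    {𝒳 : Type*} [Countable 𝒳] [DecidableEq 𝒳]
    [MeasurableSpace 𝒳] [MeasurableSingletonClass 𝒳]
    {Ω : Type*} [MeasureSpace Ω] [IsProbabilityMeasure (ℙ : Measure Ω)]
    (p : 𝒳 → ℝ) (hp0 : ∀ u, 0 ≤ p u) (hp1 : ∑' u, p u = 1)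
    (m : ℕ) (hm : Even m) (hm0 : 0 < m) (d : ℕ) (hd : d = m / 2)
    (δ₁ δ₂ : ℝ) (hδ₁ : δ₁ ∈ Set.Ioo (0:ℝ) 1) (hδ₂ : δ₂ ∈ Set.Ioo (0:ℝ) 1)
    (c : ℕ → ℕ → ℝ)
    (hc : ∀ n : ℕ, MomentIdentity n m d (c n))
    (hcnonneg : ∀ n : ℕ, ∀ k ∈ Finset.Icc 1 d, 0 ≤ c n k)
    (hcgrowth : ∀ n : ℕ, ∀ k ∈ Finset.Icc 1 d, c n k ≤ (k:ℝ)^(m-k) * (n:ℝ)^k) :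
    ∃ C : ℝ, 0 < C ∧
      ∀ n : ℕ, 2 ≤ n →
        ∀ X : Fin n → Ω → 𝒳, (∀ i, Measurable (X i)) →
          iIndepFun X ℙ →
          (∀ i u, (ℙ {ω | X i ω = u}).toReal = p u) →
          ∀ ω : Ω,
            Rb n d m (c n) δ₁ δ₂ (empSum d (c n) X ω) ≤
              (1/(n:ℝ)) * (c n d / δ₁) ^ ((1:ℝ)/(m:ℝ)) *
                (∑' u, (emp X ω u * (1 - emp X ω u))^d) ^ ((1:ℝ)/(m:ℝ))
              + C * (n:ℝ) ^ (-(1/2 : ℝ) * (1 + 1/(m:ℝ))) := by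

  obtain ⟨hδ₁0, hδ₁1⟩ := hδ₁
  obtain ⟨hδ₂0, hδ₂1⟩ := hδ₂
  have hmd : m = 2 * d := by
    obtain ⟨t, ht⟩ := hm
    subst hd
    omega
  have hd1 : 1 ≤ d := by omega
  have hdmem : d ∈ Finset.Icc 1 d := Finset.mem_Icc.mpr ⟨hd1, le_rfl⟩
  have hm0' : (0:ℝ) < (m:ℝ) := by exact_mod_cast hm0
  have hmr : (m:ℝ) = 2 * (d:ℝ) := by exact_mod_cast hmd
  have hd0' : (0:ℝ) < (d:ℝ) := by exact_mod_cast hd1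
  set r : ℝ := 1 / (m:ℝ) with hrdef
  have hr0 : 0 < r := by rw [hrdef]; positivity
  have hr1 : r ≤ 1 := by
    rw [hrdef, div_le_one hm0']
    exact_mod_cast hm0
  set SQ : ℝ := Real.sqrt (2 * Real.log (1/δ₂)) with hSQ
  have hSQ0 : 0 ≤ SQ := Real.sqrt_nonneg _
  set A₁ : ℝ := ∑ k ∈ Finset.Icc 1 (d-1), (k:ℝ)^(m-k) with hA₁
  set A₂ : ℝ := ∑ k ∈ Finset.Icc 1 d, (k:ℝ)^(m-k) * (k:ℝ) with hA₂
  set A₃ : ℝ := ∑ k ∈ Finset.Icc 1 d, 2 * (k:ℝ)^(m-k) * (k:ℝ) * (k:ℝ) with hA₃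
  have hA₁0 : 0 ≤ A₁ := Finset.sum_nonneg fun k _ => by positivity
  have hA₂0 : 0 ≤ A₂ := Finset.sum_nonneg fun k _ => by positivity
  have hA₃0 : 0 ≤ A₃ := Finset.sum_nonneg fun k _ => by positivity
  set K : ℝ := A₁ + SQ * (A₂ + A₃) with hK
  have hK0 : 0 ≤ K := by
    have : 0 ≤ SQ * (A₂ + A₃) := mul_nonneg hSQ0 (by linarith)
    rw [hK]; linarith
  set C₁ : ℝ := ((d:ℝ)^(m-d) / δ₁) ^ r with hC₁
  set C₂ : ℝ := 2 * (K / δ₁) ^ r with hC₂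
  have hC₁0 : 0 < C₁ := Real.rpow_pos_of_pos (by positivity) r
  have hC₂0 : 0 ≤ C₂ := by
    rw [hC₂]
    have : 0 ≤ (K / δ₁) ^ r := Real.rpow_nonneg (div_nonneg hK0 hδ₁0.le) r
    linarith
  refine ⟨C₁ + C₂, by linarith, ?_⟩
  intro n hn X _ _ _ ω
  have hn0 : 0 < n := by omega
  have hN0 : (0:ℝ) < (n:ℝ) := by exact_mod_cast hn0
  have hN1 : (1:ℝ) ≤ (n:ℝ) := by exact_mod_cast hn0
  have hN2 : (2:ℝ) ≤ (n:ℝ) := by exact_mod_cast hn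
  -- the two key empirical quantities
  have hT1 : ∑' u, (emp X ω u * (1 - emp X ω u))^d ≤ 1 :=
    emp_pow_tsum_le X ω hn0 d (by omega)
  have hT0 : 0 ≤ ∑' u, (emp X ω u * (1 - emp X ω u))^d := emp_pow_tsum_nonneg X ω d
  have hcd0 : 0 ≤ c n d := hcnonneg n d hdmem
  -- decomposition of the empirical sum
  have hgsum : ∀ k ∈ Finset.Icc 1 d,
      Summable (fun u => c n k * (emp X ω u * (1 - emp X ω u))^k) := by
    intro k hk
    exact (emp_pow_summable X ω k (by have := (Finset.mem_Icc.mp hk).1; omega)).mul_left _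
  have hS : empSum d (c n) X ω
      = ∑ k ∈ Finset.Icc 1 d, c n k * ∑' u, (emp X ω u * (1 - emp X ω u))^k := by
    unfold empSum
    rw [Summable.tsum_finsetSum hgsum]
    exact Finset.sum_congr rfl fun k _ => tsum_mul_left
  have hS0 : 0 ≤ empSum d (c n) X ω := by
    rw [hS]
    exact Finset.sum_nonneg fun k hk =>
      mul_nonneg (hcnonneg n k hk) (emp_pow_tsum_nonneg X ω k)
  have hIcc : Finset.Icc 1 d = insert d (Finset.Icc 1 (d-1)) := by
    ext a
    simp only [Finset.mem_Icc, Finset.mem_insert]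
    omega
  have hdni : d ∉ Finset.Icc 1 (d-1) := by
    simp only [Finset.mem_Icc]
    omega
  have hS2 : empSum d (c n) X ω
      ≤ c n d * (∑' u, (emp X ω u * (1 - emp X ω u))^d) + A₁ * (n:ℝ)^(d-1) := by
    rw [hS, hIcc, Finset.sum_insert hdni]
    have hlow : ∑ k ∈ Finset.Icc 1 (d-1), c n k * ∑' u, (emp X ω u * (1 - emp X ω u))^k
        ≤ A₁ * (n:ℝ)^(d-1) := by
      rw [hA₁, Finset.sum_mul]
      apply Finset.sum_le_sum
      intro k hk
      obtain ⟨hk1, hkd⟩ := Finset.mem_Icc.mp hk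
      have hk' : k ∈ Finset.Icc 1 d := Finset.mem_Icc.mpr ⟨hk1, by omega⟩
      have h1 : c n k * ∑' u, (emp X ω u * (1 - emp X ω u))^k ≤ c n k :=
        mul_le_of_le_one_right (hcnonneg n k hk') (emp_pow_tsum_le X ω hn0 k (by omega))
      have h2 : c n k ≤ (k:ℝ)^(m-k) * (n:ℝ)^(d-1) :=
        (hcgrowth n k hk').trans
          (mul_le_mul_of_nonneg_left (pow_le_pow_right₀ hN1 (by omega)) (by positivity))
      linarith
    linarith
  -- bound on epsN
  have hlog0 : 0 ≤ Real.log (1/δ₂) := (Real.log_pos (one_lt_one_div hδ₂0 hδ₂1)).le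
  have hsqrt_split : Real.sqrt ((2/(n:ℝ)) * Real.log (1/δ₂)) = SQ * (n:ℝ) ^ (-(1/2) : ℝ) := by
    rw [show (2/(n:ℝ)) * Real.log (1/δ₂) = (2 * Real.log (1/δ₂)) * (1/(n:ℝ)) by ring,
        Real.sqrt_mul (by positivity), ← hSQ]
    congr 1
    rw [one_div, Real.sqrt_inv, Real.rpow_neg hN0.le, Real.sqrt_eq_rpow]
  have hBub : ∀ q ∈ Set.Icc (0:ℝ) 1,
      (∑ k ∈ Finset.Icc 1 d, c n k * (k:ℝ) * (q*(1-q))^(k-1) * (1-2*q)) ≤ A₂ * (n:ℝ)^d := by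
    intro q hq
    obtain ⟨hq0, hq1⟩ := hq
    rw [hA₂, Finset.sum_mul]
    apply Finset.sum_le_sum
    intro k hk
    obtain ⟨hk1, hkd⟩ := Finset.mem_Icc.mp hk
    have hck := hcnonneg n k hk
    have hkc : (0:ℝ) ≤ (k:ℝ) := Nat.cast_nonneg k
    have hx0 : (0:ℝ) ≤ q*(1-q) := mul_nonneg hq0 (by linarith)
    have hx1 : q*(1-q) ≤ 1 := by nlinarith
    have hp0 : (0:ℝ) ≤ (q*(1-q))^(k-1) := pow_nonneg hx0 _
    have hp1 : (q*(1-q))^(k-1) ≤ 1 := pow_le_one₀ hx0 hx1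
    have h2q : 1-2*q ≤ 1 := by linarith
    have step1 : c n k * (k:ℝ) * (q*(1-q))^(k-1) * (1-2*q) ≤ c n k * (k:ℝ) := by
      nlinarith [mul_nonneg (mul_nonneg hck hkc) hp0, mul_nonneg hck hkc]
    have hNk : (n:ℝ)^k ≤ (n:ℝ)^d := pow_le_pow_right₀ hN1 hkd
    have step2 : c n k * (k:ℝ) ≤ (k:ℝ)^(m-k) * (k:ℝ) * (n:ℝ)^d := by
      have h1 := hcgrowth n k hk
      calc c n k * (k:ℝ) ≤ ((k:ℝ)^(m-k) * (n:ℝ)^k) * (k:ℝ) :=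
            mul_le_mul_of_nonneg_right h1 hkc
        _ = (k:ℝ)^(m-k) * (k:ℝ) * (n:ℝ)^k := by ring
        _ ≤ (k:ℝ)^(m-k) * (k:ℝ) * (n:ℝ)^d :=
            mul_le_mul_of_nonneg_left hNk (by positivity)
    linarith
  have hGub : ∀ q : ℝ, (⨆ _ : q ∈ Set.Icc (0:ℝ) 1,
      ∑ k ∈ Finset.Icc 1 d, c n k * (k:ℝ) * (q*(1-q))^(k-1) * (1-2*q)) ≤ A₂ * (n:ℝ)^d := by
    intro q
    by_cases hq : q ∈ Set.Icc (0:ℝ) 1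
    · rw [ciSup_pos hq]
      exact hBub q hq
    · haveI : IsEmpty (q ∈ Set.Icc (0:ℝ) 1) := ⟨hq⟩
      rw [Real.iSup_of_isEmpty]
      positivity
  have hA₂N0 : (0:ℝ) ≤ A₂ * (n:ℝ)^d := mul_nonneg hA₂0 (by positivity)
  have hG_le : (⨆ q ∈ Set.Icc (0:ℝ) 1,
      ∑ k ∈ Finset.Icc 1 d, c n k * (k:ℝ) * (q*(1-q))^(k-1) * (1-2*q)) ≤ A₂ * (n:ℝ)^d :=
    Real.iSup_le hGub hA₂N0
  have hbdd : BddAbove (Set.range fun q : ℝ => ⨆ _ : q ∈ Set.Icc (0:ℝ) 1,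
      ∑ k ∈ Finset.Icc 1 d, c n k * (k:ℝ) * (q*(1-q))^(k-1) * (1-2*q)) := by
    refine ⟨A₂ * (n:ℝ)^d, ?_⟩
    rintro x ⟨q, rfl⟩
    exact hGub q
  have hG0 : 0 ≤ ⨆ q ∈ Set.Icc (0:ℝ) 1,
      ∑ k ∈ Finset.Icc 1 d, c n k * (k:ℝ) * (q*(1-q))^(k-1) * (1-2*q) := by
    have h2 : (⨆ _ : (2:ℝ) ∈ Set.Icc (0:ℝ) 1,
        ∑ k ∈ Finset.Icc 1 d, c n k * (k:ℝ) * ((2:ℝ)*(1-(2:ℝ)))^(k-1) * (1-2*(2:ℝ))) = 0 := by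
      haveI : IsEmpty ((2:ℝ) ∈ Set.Icc (0:ℝ) 1) := ⟨fun h => by
        have := h.2
        norm_num at this⟩
      exact Real.iSup_of_isEmpty _
    calc (0:ℝ) = _ := h2.symm
      _ ≤ _ := le_ciSup hbdd (2:ℝ)
  have hSig0 : 0 ≤ ∑ k ∈ Finset.Icc 1 d, c n k * (k:ℝ) * ((k:ℝ)-1) / ((n:ℝ) * (2:ℝ)^(2*(k:ℤ)-3)) := by
    apply Finset.sum_nonneg
    intro k hk
    obtain ⟨hk1, _⟩ := Finset.mem_Icc.mp hk
    have hk1' : (1:ℝ) ≤ (k:ℝ) := by exact_mod_cast hk1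
    have hz : (0:ℝ) < (2:ℝ)^(2*(k:ℤ)-3) := zpow_pos (by norm_num) _
    have hnum : 0 ≤ c n k * (k:ℝ) * ((k:ℝ)-1) :=
      mul_nonneg (mul_nonneg (hcnonneg n k hk) (by linarith)) (by linarith)
    positivity
  have hSigle : ∑ k ∈ Finset.Icc 1 d, c n k * (k:ℝ) * ((k:ℝ)-1) / ((n:ℝ) * (2:ℝ)^(2*(k:ℤ)-3))
      ≤ A₃ * (n:ℝ)^d := by
    rw [hA₃, Finset.sum_mul]
    apply Finset.sum_le_sum
    intro k hk
    obtain ⟨hk1, hkd⟩ := Finset.mem_Icc.mp hk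
    have hk1' : (1:ℝ) ≤ (k:ℝ) := by exact_mod_cast hk1
    have hz : (0:ℝ) < (2:ℝ)^(2*(k:ℤ)-3) := zpow_pos (by norm_num) _
    have hnum : 0 ≤ c n k * (k:ℝ) * ((k:ℝ)-1) :=
      mul_nonneg (mul_nonneg (hcnonneg n k hk) (by linarith)) (by linarith)
    have hden : (1:ℝ)/2 ≤ (n:ℝ) * (2:ℝ)^(2*(k:ℤ)-3) := by
      have h1 : ((2:ℝ))^(-1:ℤ) ≤ (2:ℝ)^(2*(k:ℤ)-3) :=
        zpow_le_zpow_right₀ (by norm_num) (by omega)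
      have h2 : ((2:ℝ))^(-1:ℤ) = 1/2 := by norm_num
      have h3 : (1:ℝ)/2 ≤ (2:ℝ)^(2*(k:ℤ)-3) := h2 ▸ h1
      calc (1:ℝ)/2 ≤ (2:ℝ)^(2*(k:ℤ)-3) := h3
        _ ≤ (n:ℝ) * (2:ℝ)^(2*(k:ℤ)-3) := le_mul_of_one_le_left hz.le hN1
    calc c n k * (k:ℝ) * ((k:ℝ)-1) / ((n:ℝ) * (2:ℝ)^(2*(k:ℤ)-3))
        ≤ c n k * (k:ℝ) * ((k:ℝ)-1) / (1/2) :=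
          div_le_div_of_nonneg_left hnum (by norm_num) hden
      _ = 2 * (c n k * (k:ℝ) * ((k:ℝ)-1)) := by ring
      _ ≤ 2 * (k:ℝ)^(m-k) * (k:ℝ) * (k:ℝ) * (n:ℝ)^d := by
          have h1 : c n k ≤ (k:ℝ)^(m-k) * (n:ℝ)^d :=
            (hcgrowth n k hk).trans
              (mul_le_mul_of_nonneg_left (pow_le_pow_right₀ hN1 hkd) (by positivity))
          have h2 : c n k * (k:ℝ) * ((k:ℝ)-1) ≤ ((k:ℝ)^(m-k) * (n:ℝ)^d) * (k:ℝ) * ((k:ℝ)-1) :=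
            mul_le_mul_of_nonneg_right
              (mul_le_mul_of_nonneg_right h1 (by linarith)) (by linarith)
          have h3 : ((k:ℝ)^(m-k) * (n:ℝ)^d) * (k:ℝ) * ((k:ℝ)-1)
              ≤ ((k:ℝ)^(m-k) * (n:ℝ)^d) * (k:ℝ) * (k:ℝ) :=
            mul_le_mul_of_nonneg_left (by linarith) (by positivity)
          linarith [h2, h3]
  have heps0 : 0 ≤ epsN n d (c n) δ₂ := by
    unfold epsN
    exact mul_nonneg (Real.sqrt_nonneg _) (by linarith)
  have hNd2 : (n:ℝ)^d * (n:ℝ)^(-(1/2):ℝ) = (n:ℝ) ^ ((d:ℝ)-1/2) := by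
    rw [← Real.rpow_natCast (n:ℝ) d, ← Real.rpow_add hN0]
    ring_nf
  have heps : epsN n d (c n) δ₂ ≤ SQ * (A₂ + A₃) * (n:ℝ) ^ ((d:ℝ) - 1/2) := by
    unfold epsN
    rw [hsqrt_split]
    have hsum_le : (⨆ q ∈ Set.Icc (0:ℝ) 1,
          ∑ k ∈ Finset.Icc 1 d, c n k * (k:ℝ) * (q*(1-q))^(k-1) * (1-2*q))
        + ∑ k ∈ Finset.Icc 1 d, c n k * (k:ℝ) * ((k:ℝ)-1) / ((n:ℝ) * (2:ℝ)^(2*(k:ℤ)-3))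
        ≤ (A₂ + A₃) * (n:ℝ)^d := by
      have := hG_le
      have := hSigle
      nlinarith
    have hfac0 : 0 ≤ SQ * (n:ℝ)^(-(1/2):ℝ) :=
      mul_nonneg hSQ0 (Real.rpow_nonneg hN0.le _)
    calc SQ * (n:ℝ)^(-(1/2):ℝ) * _ ≤ SQ * (n:ℝ)^(-(1/2):ℝ) * ((A₂ + A₃) * (n:ℝ)^d) :=
          mul_le_mul_of_nonneg_left hsum_le hfac0
      _ = SQ * (A₂ + A₃) * ((n:ℝ)^d * (n:ℝ)^(-(1/2):ℝ)) := by ring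
      _ = SQ * (A₂ + A₃) * (n:ℝ) ^ ((d:ℝ)-1/2) := by rw [hNd2]
  -- combine S and eps bounds
  have hcast : ((d-1:ℕ):ℝ) = (d:ℝ) - 1 := by
    rw [Nat.cast_sub hd1, Nat.cast_one]
  have hpow_le : (n:ℝ)^(d-1) ≤ (n:ℝ)^((d:ℝ)-1/2) := by
    rw [← Real.rpow_natCast (n:ℝ) (d-1), hcast]
    exact Real.rpow_le_rpow_of_exponent_le hN1 (by linarith)
  have hSsum : empSum d (c n) X ω + epsN n d (c n) δ₂
      ≤ c n d * (∑' u, (emp X ω u * (1 - emp X ω u))^d) + K * (n:ℝ)^((d:ℝ)-1/2) := by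
    have hh := mul_le_mul_of_nonneg_left hpow_le hA₁0
    rw [hK]
    linarith [hS2, heps, hh]
  -- final assembly
  unfold Rb
  have hQ0 : 0 ≤ (1/δ₁) * (empSum d (c n) X ω + epsN n d (c n) δ₂) :=
    mul_nonneg (by positivity) (add_nonneg hS0 heps0)
  have hq1 : 0 ≤ (c n d * (∑' u, (emp X ω u * (1 - emp X ω u))^d))/δ₁ :=
    div_nonneg (mul_nonneg hcd0 hT0) hδ₁0.le
  have hq2 : 0 ≤ (K * (n:ℝ)^((d:ℝ)-1/2))/δ₁ :=
    div_nonneg (mul_nonneg hK0 (Real.rpow_nonneg hN0.le _)) hδ₁0.le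
  have hQle : (1/δ₁) * (empSum d (c n) X ω + epsN n d (c n) δ₂)
      ≤ (c n d * (∑' u, (emp X ω u * (1 - emp X ω u))^d))/δ₁ + (K * (n:ℝ)^((d:ℝ)-1/2))/δ₁ := by
    have h2 := mul_le_mul_of_nonneg_left hSsum (by positivity : (0:ℝ) ≤ 1/δ₁)
    refine h2.trans (le_of_eq (by ring))
  have hPle : ((1/δ₁) * (empSum d (c n) X ω + epsN n d (c n) δ₂))^r
      ≤ ((c n d * (∑' u, (emp X ω u * (1 - emp X ω u))^d))/δ₁)^r
        + ((K * (n:ℝ)^((d:ℝ)-1/2))/δ₁)^r :=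
    (Real.rpow_le_rpow hQ0 hQle hr0.le).trans
      (rpow_add_le_add_rpow_real hq1 hq2 hr0.le hr1)
  have hsplit1 : ((c n d * (∑' u, (emp X ω u * (1 - emp X ω u))^d))/δ₁)^r
      = (c n d/δ₁)^r * (∑' u, (emp X ω u * (1 - emp X ω u))^d)^r := by
    rw [show c n d * (∑' u, (emp X ω u * (1 - emp X ω u))^d)/δ₁
        = (c n d/δ₁) * (∑' u, (emp X ω u * (1 - emp X ω u))^d) by ring,
      Real.mul_rpow (div_nonneg hcd0 hδ₁0.le) hT0]
  have hsplit2 : ((K * (n:ℝ)^((d:ℝ)-1/2))/δ₁)^r = (K/δ₁)^r * (n:ℝ)^(((d:ℝ)-1/2)*r) := by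
    rw [show (K * (n:ℝ)^((d:ℝ)-1/2))/δ₁ = (K/δ₁) * (n:ℝ)^((d:ℝ)-1/2) by ring,
      Real.mul_rpow (div_nonneg hK0 hδ₁0.le) (Real.rpow_nonneg hN0.le _),
      ← Real.rpow_mul hN0.le]
  rw [hsplit1, hsplit2] at hPle
  have hhalf : (d:ℝ) * r = 1/2 := by
    rw [hrdef, hmr]
    field_simp
  have hU_le : (c n d/δ₁)^r * (∑' u, (emp X ω u * (1 - emp X ω u))^d)^r
      ≤ C₁ * (n:ℝ)^((1/2):ℝ) := by
    rw [← hsplit1]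
    have h1 : c n d * (∑' u, (emp X ω u * (1 - emp X ω u))^d) ≤ (d:ℝ)^(m-d) * (n:ℝ)^d := by
      have hg := hcgrowth n d hdmem
      exact (mul_le_of_le_one_right hcd0 hT1).trans hg
    calc ((c n d * (∑' u, (emp X ω u * (1 - emp X ω u))^d))/δ₁)^r
        ≤ (((d:ℝ)^(m-d) * (n:ℝ)^d)/δ₁)^r := by
          apply Real.rpow_le_rpow hq1 _ hr0.le
          exact (div_le_div_iff_of_pos_right hδ₁0).mpr h1
      _ = ((d:ℝ)^(m-d)/δ₁)^r * ((n:ℝ)^d)^((r:ℝ)) := by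
          rw [show ((d:ℝ)^(m-d) * (n:ℝ)^d)/δ₁ = ((d:ℝ)^(m-d)/δ₁) * (n:ℝ)^d by ring,
            Real.mul_rpow (by positivity) (by positivity)]
      _ = C₁ * (n:ℝ)^((1/2):ℝ) := by
          rw [hC₁, ← Real.rpow_natCast (n:ℝ) d, ← Real.rpow_mul hN0.le, hhalf]
  have hW : Real.sqrt ((n:ℝ)/((n:ℝ)-1)) ≤ 1 + 1/(n:ℝ) := sqrt_ratio_le hN2
  have hP0 : 0 ≤ ((1/δ₁) * (empSum d (c n) X ω + epsN n d (c n) δ₂))^r :=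
    Real.rpow_nonneg hQ0 _
  have hU0 : 0 ≤ (c n d/δ₁)^r * (∑' u, (emp X ω u * (1 - emp X ω u))^d)^r :=
    mul_nonneg (Real.rpow_nonneg (div_nonneg hcd0 hδ₁0.le) _) (Real.rpow_nonneg hT0 _)
  have hV0 : 0 ≤ (K/δ₁)^r * (n:ℝ)^(((d:ℝ)-1/2)*r) :=
    mul_nonneg (Real.rpow_nonneg (div_nonneg hK0 hδ₁0.le) _) (Real.rpow_nonneg hN0.le _)
  have hexpE : ((-3/2):ℝ) ≤ -(1/2:ℝ)*(1+r) := by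
    have h := hr1
    have h0 := hr0.le
    have : -(1/2:ℝ)*(1+r) = -1/2 - r/2 := by ring
    rw [this]
    linarith [h, h0]
  have hE1 : (1/(n:ℝ) * (1/(n:ℝ))) * ((c n d/δ₁)^r * (∑' u, (emp X ω u * (1 - emp X ω u))^d)^r)
      ≤ C₁ * (n:ℝ)^(-(1/2:ℝ)*(1+r)) := by
    have hstep := mul_le_mul_of_nonneg_left hU_le
      (by positivity : (0:ℝ) ≤ 1/(n:ℝ) * (1/(n:ℝ)))
    have hid : (1/(n:ℝ) * (1/(n:ℝ))) * (C₁ * (n:ℝ)^((1/2):ℝ)) = C₁ * (n:ℝ)^((-3/2):ℝ) := by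
      rw [show ((-3/2):ℝ) = (1/2) + (-1) + (-1) by norm_num, Real.rpow_add hN0,
        Real.rpow_add hN0, Real.rpow_neg_one]
      field_simp
    have hlast : C₁ * (n:ℝ)^((-3/2):ℝ) ≤ C₁ * (n:ℝ)^(-(1/2:ℝ)*(1+r)) :=
      mul_le_mul_of_nonneg_left (Real.rpow_le_rpow_of_exponent_le hN1 hexpE) hC₁0.le
    calc (1/(n:ℝ) * (1/(n:ℝ))) * ((c n d/δ₁)^r * (∑' u, (emp X ω u * (1 - emp X ω u))^d)^r)
        ≤ (1/(n:ℝ) * (1/(n:ℝ))) * (C₁ * (n:ℝ)^((1/2):ℝ)) := hstep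
      _ = C₁ * (n:ℝ)^((-3/2):ℝ) := hid
      _ ≤ C₁ * (n:ℝ)^(-(1/2:ℝ)*(1+r)) := hlast
  have hexp2 : ((d:ℝ)-1/2)*r + (-1) = -(1/2:ℝ)*(1+r) := by
    rw [hrdef, hmr]
    have : (d:ℝ) ≠ 0 := hd0'.ne'
    field_simp
    ring
  have hE2 : (1/(n:ℝ) * (1+1/(n:ℝ))) * ((K/δ₁)^r * (n:ℝ)^(((d:ℝ)-1/2)*r))
      ≤ C₂ * (n:ℝ)^(-(1/2:ℝ)*(1+r)) := by
    have h1N : 1/(n:ℝ) ≤ 1 := by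
      rw [div_le_one hN0]
      exact hN1
    have hfac : (1/(n:ℝ)) * (1+1/(n:ℝ)) ≤ (1/(n:ℝ)) * 2 :=
      mul_le_mul_of_nonneg_left (by linarith) (by positivity)
    have hstep : (1/(n:ℝ) * (1+1/(n:ℝ))) * ((K/δ₁)^r * (n:ℝ)^(((d:ℝ)-1/2)*r))
        ≤ ((1/(n:ℝ)) * 2) * ((K/δ₁)^r * (n:ℝ)^(((d:ℝ)-1/2)*r)) :=
      mul_le_mul_of_nonneg_right hfac hV0
    have hid : ((1/(n:ℝ)) * 2) * ((K/δ₁)^r * (n:ℝ)^(((d:ℝ)-1/2)*r))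
        = C₂ * (n:ℝ)^(((d:ℝ)-1/2)*r + (-1)) := by
      rw [Real.rpow_add hN0, Real.rpow_neg_one, hC₂]
      field_simp
    rw [hexp2] at hid
    exact hstep.trans hid.le
  have hmain : 1/(n:ℝ) * Real.sqrt ((n:ℝ)/((n:ℝ)-1))
        * ((1/δ₁) * (empSum d (c n) X ω + epsN n d (c n) δ₂))^r
      ≤ 1/(n:ℝ) * ((c n d/δ₁)^r * (∑' u, (emp X ω u * (1 - emp X ω u))^d)^r)
        + (C₁ + C₂) * (n:ℝ)^(-(1/2:ℝ)*(1+r)) := by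
    calc 1/(n:ℝ) * Real.sqrt ((n:ℝ)/((n:ℝ)-1))
          * ((1/δ₁) * (empSum d (c n) X ω + epsN n d (c n) δ₂))^r
        ≤ 1/(n:ℝ) * (1+1/(n:ℝ))
          * ((1/δ₁) * (empSum d (c n) X ω + epsN n d (c n) δ₂))^r := by
          apply mul_le_mul_of_nonneg_right _ hP0
          exact mul_le_mul_of_nonneg_left hW (by positivity)
      _ ≤ 1/(n:ℝ) * (1+1/(n:ℝ))
          * ((c n d/δ₁)^r * (∑' u, (emp X ω u * (1 - emp X ω u))^d)^r
            + (K/δ₁)^r * (n:ℝ)^(((d:ℝ)-1/2)*r)) := by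
          apply mul_le_mul_of_nonneg_left hPle (by positivity)
      _ = 1/(n:ℝ) * ((c n d/δ₁)^r * (∑' u, (emp X ω u * (1 - emp X ω u))^d)^r)
          + (1/(n:ℝ) * (1/(n:ℝ)))
            * ((c n d/δ₁)^r * (∑' u, (emp X ω u * (1 - emp X ω u))^d)^r)
          + (1/(n:ℝ) * (1+1/(n:ℝ))) * ((K/δ₁)^r * (n:ℝ)^(((d:ℝ)-1/2)*r)) := by ring
      _ ≤ 1/(n:ℝ) * ((c n d/δ₁)^r * (∑' u, (emp X ω u * (1 - emp X ω u))^d)^r)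
          + C₁ * (n:ℝ)^(-(1/2:ℝ)*(1+r)) + C₂ * (n:ℝ)^(-(1/2:ℝ)*(1+r)) :=
          add_le_add (add_le_add le_rfl hE1) hE2
      _ = 1/(n:ℝ) * ((c n d/δ₁)^r * (∑' u, (emp X ω u * (1 - emp X ω u))^d)^r)
          + (C₁ + C₂) * (n:ℝ)^(-(1/2:ℝ)*(1+r)) := by ring
  exact hmain.trans (le_of_eq (by ring))
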